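/- Let h be a real symmetric N×N matrix with simple eigenvalues φ₁ < … < φ_N and corresponding orthonormal eigenvectors |φₙ⟩. Let p(z) = det(zI − h) be its characteristic polynomial and q(z) = det(zI − h̃) the characteristic polynomial of the principal submatrix h̃ obtained by deleting the last row and column. Then the squared weight of each eigenvector on the last coordinate satisfies ⟨N|φₙ⟩² = q(φₙ)/p'(φₙ). -/

import Mathlib

open Matrix Polynomial Finset

lemma stmt10_eval_charpoly {m : Type*} [Fintype m] [DecidableEq m]
    (M : Matrix m m ℝ) (μ : ℝ) : (M.charpoly).eval μ = (μ • 1 - M).det := by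
  rw [Matrix.charpoly, ← Polynomial.coe_evalRingHom, RingHom.map_det]
  congr 1
  ext i j
  simp [charmatrix_apply, diagonal_apply, Matrix.one_apply, apply_ite]

lemma stmt10_derivative_prod {ι : Type*} [DecidableEq ι] (s : Finset ι) (f : ι → Polynomial ℝ) :
    Polynomial.derivative (∏ i ∈ s, f i)
      = ∑ i ∈ s, (∏ j ∈ s.erase i, f j) * Polynomial.derivative (f i) := by
  induction s using Finset.induction_on with
  | empty => simp
  | @insert x s hx ih =>
    rw [Finset.prod_insert hx, derivative_mul, ih, Finset.mul_sum, Finset.sum_insert hx,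
      Finset.erase_insert hx, mul_comm (Polynomial.derivative (f x))]
    congr 1
    refine Finset.sum_congr rfl fun i hi => ?_
    rw [Finset.erase_insert_of_ne (by rintro rfl; exact hx hi),
      Finset.prod_insert (fun hm => hx (Finset.mem_of_mem_erase hm))]
    ring

/-- For a real symmetric `N×N` matrix `h` with simple eigenvalues, with `p` its
characteristic polynomial and `q` that of the principal submatrix obtained by deleting the
last row and column, the squared last component of each unit eigenvector satisfies
`⟨N|φₙ⟩² = q(φₙ)/p'(φₙ)`. -/
theorem stmt10 (n : ℕ) (h : Matrix (Fin (n + 1)) (Fin (n + 1)) ℝ)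
    (hH : h.IsHermitian) (hsimple : Function.Injective hH.eigenvalues)
    (p q : Polynomial ℝ)
    (hp : p = h.charpoly)
    (hq : q = (h.submatrix Fin.castSucc Fin.castSucc).charpoly) :
    ∀ i : Fin (n + 1),
      (hH.eigenvectorBasis i (Fin.last n)) ^ 2 =
        q.eval (hH.eigenvalues i) / (Polynomial.derivative p).eval (hH.eigenvalues i) := by
  intro i
  set lam := hH.eigenvalues with hlam
  set U : Matrix (Fin (n+1)) (Fin (n+1)) ℝ :=
    (hH.eigenvectorUnitary : Matrix (Fin (n+1)) (Fin (n+1)) ℝ) with hU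
  have hUs : U * star U = 1 := (Matrix.mem_unitaryGroup_iff).mp hH.eigenvectorUnitary.2
  have hsU : star U * U = 1 := (Matrix.mem_unitaryGroup_iff').mp hH.eigenvectorUnitary.2
  have hspec : h = U * diagonal lam * star U := by
    have := hH.spectral_theorem
    simpa using this
  have hconj : ∀ μ : ℝ, μ • (1 : Matrix (Fin (n+1)) (Fin (n+1)) ℝ) - h
      = U * (diagonal fun j => μ - lam j) * star U := by
    intro μ
    have hd : (diagonal fun j => μ - lam j)
        = μ • (1 : Matrix (Fin (n+1)) (Fin (n+1)) ℝ) - diagonal lam := by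
      ext a b
      by_cases hab : a = b <;> simp [diagonal_apply, Matrix.one_apply, hab]
    rw [hd, Matrix.mul_sub, Matrix.sub_mul, Matrix.mul_smul, Matrix.mul_one, Matrix.smul_mul,
      hUs, ← hspec]
  have hadjU : adjugate U = U.det • star U := by
    calc adjugate U = (star U * U) * adjugate U := by rw [hsU, Matrix.one_mul]
    _ = star U * (U.det • 1) := by rw [Matrix.mul_assoc, Matrix.mul_adjugate U]
    _ = U.det • star U := by rw [Matrix.mul_smul, Matrix.mul_one]
  have hdetsU : (star U).det = U.det := by
    simp [star_eq_conjTranspose, det_conjTranspose]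
  have hadjsU : adjugate (star U) = U.det • U := by
    calc adjugate (star U) = (U * star U) * adjugate (star U) := by rw [hUs, Matrix.one_mul]
    _ = U * ((star U).det • 1) := by rw [Matrix.mul_assoc, Matrix.mul_adjugate (star U)]
    _ = U.det • U := by rw [hdetsU, Matrix.mul_smul, Matrix.mul_one]
  have hdet2 : U.det * U.det = 1 := by
    have := congrArg Matrix.det hUs
    simpa [det_mul, hdetsU, mul_comm] using this
  -- determinant of μ•1 - h
  have hdeth : ∀ μ : ℝ, (μ • (1 : Matrix (Fin (n+1)) (Fin (n+1)) ℝ) - h).det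
      = ∏ j, (μ - lam j) := by
    intro μ
    rw [hconj μ, det_mul, det_mul, det_diagonal, hdetsU, mul_comm U.det, mul_assoc, hdet2,
      mul_one]
  -- p as a product
  have hp_prod : p = ∏ j, (X - C (lam j)) := by
    rw [hp]
    apply Polynomial.funext
    intro μ
    rw [stmt10_eval_charpoly, hdeth μ]
    simp [eval_prod]
  set D : ℝ := ∏ j ∈ univ.erase i, (lam i - lam j) with hD
  have hDne : D ≠ 0 := by
    rw [hD]
    refine Finset.prod_ne_zero_iff.mpr fun j hj => ?_
    have hji : j ≠ i := (Finset.mem_erase.mp hj).1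
    exact sub_ne_zero.mpr fun e => hji (hsimple e.symm)
  -- derivative of p at lam i
  have hderiv : (Polynomial.derivative p).eval (lam i) = D := by
    rw [hp_prod, stmt10_derivative_prod, eval_finset_sum, Finset.sum_eq_single i]
    · simp [eval_prod, hD]
    · intro k _ hk
      rw [derivative_X_sub_C, mul_one, eval_prod]
      simp only [eval_sub, eval_X, eval_C]
      exact Finset.prod_eq_zero
        (Finset.mem_erase.mpr ⟨Ne.symm hk, Finset.mem_univ i⟩) (sub_self _)
    · simp
  -- adjugate of (lam i)•1 - h
  have hadjconj : adjugate ((lam i) • (1 : Matrix (Fin (n+1)) (Fin (n+1)) ℝ) - h)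
      = U * (diagonal fun k => ∏ j ∈ univ.erase k, (lam i - lam j)) * star U := by
    rw [hconj, adjugate_mul_distrib, adjugate_mul_distrib, hadjU, hadjsU, adjugate_diagonal]
    simp only [Matrix.smul_mul, Matrix.mul_smul, smul_smul, hdet2, one_smul, Matrix.mul_assoc]
  -- q evaluated at lam i
  have hq_eval : q.eval (lam i) = U (Fin.last n) i ^ 2 * D := by
    have h1 : q.eval (lam i)
        = adjugate ((lam i) • (1 : Matrix (Fin (n+1)) (Fin (n+1)) ℝ) - h)
            (Fin.last n) (Fin.last n) := by
      rw [hq, stmt10_eval_charpoly, adjugate_fin_succ_eq_det_submatrix, Fin.succAbove_last]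
      have hsub : ((lam i) • (1 : Matrix (Fin (n+1)) (Fin (n+1)) ℝ) - h).submatrix
          Fin.castSucc Fin.castSucc
          = (lam i) • (1 : Matrix (Fin n) (Fin n) ℝ) - h.submatrix Fin.castSucc Fin.castSucc := by
        ext a b
        by_cases hab : a = b <;>
          simp [Matrix.one_apply, Fin.castSucc_inj, hab]
      rw [hsub]
      have heven : (-1 : ℝ) ^ (((Fin.last n) : ℕ) + ((Fin.last n) : ℕ)) = 1 :=
        Even.neg_one_pow ⟨n, by simp⟩
      rw [heven, one_mul]
    rw [h1, hadjconj, Matrix.mul_assoc, mul_apply]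
    have h2 : ∀ k, ((diagonal fun k => ∏ j ∈ univ.erase k, (lam i - lam j)) * star U) k
        (Fin.last n) = (∏ j ∈ univ.erase k, (lam i - lam j)) * U (Fin.last n) k := by
      intro k
      rw [diagonal_mul]
      simp [star_apply]
    simp only [h2]
    rw [Finset.sum_eq_single i]
    · rw [hD]; ring
    · intro k _ hk
      have hz : (∏ j ∈ univ.erase k, (lam i - lam j)) = 0 :=
        Finset.prod_eq_zero (Finset.mem_erase.mpr ⟨Ne.symm hk, Finset.mem_univ i⟩) (sub_self _)
      rw [hz]
      ring
    · simp
  have hUB : hH.eigenvectorBasis i (Fin.last n) = U (Fin.last n) i := by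
    rw [hU, Matrix.IsHermitian.eigenvectorUnitary_apply]
  rw [hUB, hq_eval, hderiv, mul_div_assoc, div_self hDne, mul_one]
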